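/- Let H ⊆ 2^[n] be hereditary and compressed with respect to x ∈ [n], A ⊆ H with A' ≠ ∅. If |A*| + |A'|/(n+1) = |H⟨x⟩|, then A = H = {∅} ∪ {{i} : i ∈ [n]}. -/

import Mathlib

open Finset FinsetFamily

/-- Lift: if `E` is a proper subset of `B ∈ H` with `x ∉ B`, then `insert x E ∈ H`. -/
lemma lift_mem {n : ℕ} (H : Finset (Finset (Fin n))) (x : Fin n)
    (hH : ∀ A ∈ H, ∀ B ⊆ A, B ∈ H)
    (hcomp : ∀ F ∈ H, ∀ y ∈ F, x ∉ F → insert x (F.erase y) ∈ H)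
    {B E : Finset (Fin n)} (hB : B ∈ H) (hxB : x ∉ B) (hEB : E ⊆ B)
    (hy : ∃ y ∈ B, y ∉ E) : insert x E ∈ H := by
  obtain ⟨y, hyB, hyE⟩ := hy
  have h1 : insert x (B.erase y) ∈ H := hcomp B hB y hyB hxB
  refine hH _ h1 _ ?_
  intro z hz
  rcases Finset.mem_insert.1 hz with rfl | hzE
  · exact Finset.mem_insert_self _ _
  · exact Finset.mem_insert_of_mem (Finset.mem_erase.2 ⟨fun h => hyE (h ▸ hzE), hEB hzE⟩)

/-- Chvátal's theorem for compressed hereditary families, via Marica–Schönheim. -/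
lemma chvatal {n : ℕ} (H : Finset (Finset (Fin n))) (x : Fin n)
    (hH : ∀ A ∈ H, ∀ B ⊆ A, B ∈ H)
    (hcomp : ∀ F ∈ H, ∀ y ∈ F, x ∉ F → insert x (F.erase y) ∈ H)
    (B : Finset (Finset (Fin n))) (hBH : B ⊆ H)
    (hint : ∀ A ∈ B, ∀ C ∈ B, (A ∩ C).Nonempty) :
    B.card ≤ (H.filter (fun A => x ∈ A)).card := by
  classical
  set S := H.filter (fun A => x ∈ A) with hS
  set B1 := B.filter (fun A => x ∈ A) with hB1
  set B0 := B.filter (fun A => ¬ x ∈ A) with hB0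
  set D : Finset (Finset (Fin n)) := (B0 \\ B0).image (insert x) with hD
  have hxnot : ∀ E ∈ B0 \\ B0, x ∉ E := by
    intro E hE
    rw [Finset.mem_diffs] at hE
    obtain ⟨A, hA, C, hC, rfl⟩ := hE
    have : x ∉ A := (Finset.mem_filter.1 hA).2
    simp only [Finset.mem_sdiff]
    tauto
  -- D ⊆ S
  have hDS : D ⊆ S := by
    intro F hF
    rw [hD, Finset.mem_image] at hF
    obtain ⟨E, hE, rfl⟩ := hF
    obtain ⟨A, hA, C, hC, rfl⟩ := Finset.mem_diffs.1 hE
    have hA' := Finset.mem_filter.1 hA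
    have hC' := Finset.mem_filter.1 hC
    have hAC : (A ∩ C).Nonempty := hint A hA'.1 C hC'.1
    obtain ⟨y, hy⟩ := hAC
    have hy' := Finset.mem_inter.1 hy
    refine Finset.mem_filter.2 ⟨?_, Finset.mem_insert_self _ _⟩
    refine lift_mem H x hH hcomp (hBH hA'.1) hA'.2 (Finset.sdiff_subset) ⟨y, hy'.1, ?_⟩
    simp only [Finset.mem_sdiff]
    tauto
  -- members of D are disjoint from some member of B0, hence not in B1
  have hDB1 : ∀ F ∈ D, F ∉ B1 := by
    intro F hF hFB1
    rw [hD, Finset.mem_image] at hF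
    obtain ⟨E, hE, rfl⟩ := hF
    obtain ⟨A, hA, C, hC, rfl⟩ := Finset.mem_diffs.1 hE
    have hC' := Finset.mem_filter.1 hC
    have h1 : ((insert x (A \ C)) ∩ C).Nonempty := hint _ (Finset.mem_filter.1 hFB1).1 C hC'.1
    obtain ⟨z, hz⟩ := h1
    rw [Finset.mem_inter, Finset.mem_insert] at hz
    rcases hz.1 with rfl | hzAC
    · exact hC'.2 hz.2
    · exact (Finset.mem_sdiff.1 hzAC).2 hz.2
  have hB1S : B1 ⊆ S := by
    intro F hF
    have h := Finset.mem_filter.1 hF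
    exact Finset.mem_filter.2 ⟨hBH h.1, h.2⟩
  have hdisj : Disjoint B1 D := by
    rw [Finset.disjoint_right]
    intro F hF
    exact fun h => hDB1 F hF h
  have hcardD : B0.card ≤ D.card := by
    rw [hD, Finset.card_image_of_injOn]
    · exact Finset.card_le_card_diffs _
    · intro E1 h1 E2 h2 h
      have := hxnot E1 h1
      have := hxnot E2 h2
      have h3 : (insert x E1).erase x = (insert x E2).erase x := by rw [h]
      rwa [Finset.erase_insert (hxnot E1 h1), Finset.erase_insert (hxnot E2 h2)] at h3
  have hsplit : B1.card + B0.card = B.card :=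
    Finset.card_filter_add_card_filter_not (p := fun A => x ∈ A)
  have hunion : B1.card + D.card ≤ S.card := by
    rw [← Finset.card_union_of_disjoint hdisj]
    exact Finset.card_le_card (Finset.union_subset hB1S hDS)
  omega

/-- Degree bound: some element covers at least a 1/n fraction of the nonempty sets. -/
lemma degree_bound {n : ℕ} (x : Fin n) (F : Finset (Finset (Fin n))) :
    ∃ y : Fin n, (F.erase ∅).card ≤ n * (F.filter (fun A => y ∈ A)).card := by
  classical
  obtain ⟨y₀, -, hy₀⟩ := Finset.exists_max_image (univ : Finset (Fin n))
    (fun y => (F.filter (fun A => y ∈ A)).card) ⟨x, Finset.mem_univ x⟩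
  refine ⟨y₀, ?_⟩
  have h1 : (F.erase ∅).card ≤ ∑ A ∈ F, A.card := by
    calc (F.erase ∅).card = ∑ A ∈ F.erase ∅, 1 := by simp
    _ ≤ ∑ A ∈ F.erase ∅, A.card := by
        refine Finset.sum_le_sum ?_
        intro A hA
        have : A ≠ ∅ := (Finset.mem_erase.1 hA).1
        exact Nat.one_le_iff_ne_zero.2 (by simpa [Finset.card_eq_zero] using this)
    _ ≤ ∑ A ∈ F, A.card := Finset.sum_le_sum_of_subset (Finset.erase_subset _ _)
  have h2 : ∑ y : Fin n, (F.filter (fun A => y ∈ A)).card = ∑ A ∈ F, A.card := by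
    simp only [Finset.card_filter]
    rw [Finset.sum_comm]
    refine Finset.sum_congr rfl fun A _ => ?_
    rw [← Finset.card_filter, Finset.filter_univ_mem]
  have h3 : ∑ y : Fin n, (F.filter (fun A => y ∈ A)).card
      ≤ n * (F.filter (fun A => y₀ ∈ A)).card := by
    have := Finset.sum_le_card_nsmul univ
      (fun y => (F.filter (fun A => y ∈ A)).card) ((F.filter (fun A => y₀ ∈ A)).card)
      (fun y _ => hy₀ y (Finset.mem_univ y))
    simpa [Finset.card_univ, mul_comm] using this
  omega

theorem main_inequality_equality_case {n : ℕ}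
    (H : Finset (Finset (Fin n))) (x : Fin n)
    (hH : ∀ A ∈ H, ∀ B ⊆ A, B ∈ H)
    (hcomp : ∀ F ∈ H, ∀ y ∈ F, x ∉ F → insert x (F.erase y) ∈ H)
    (𝒜 : Finset (Finset (Fin n))) (h𝒜 : 𝒜 ⊆ H)
    (hne : (𝒜 \ 𝒜.filter (fun A => ∀ B ∈ 𝒜, (A ∩ B).Nonempty)).Nonempty)
    (heq : ((𝒜.filter (fun A => ∀ B ∈ 𝒜, (A ∩ B).Nonempty)).card : ℝ) +
        ((𝒜 \ 𝒜.filter (fun A => ∀ B ∈ 𝒜, (A ∩ B).Nonempty)).card : ℝ) / (n + 1)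
      = ((H.filter (fun A => x ∈ A)).card : ℝ)) :
    𝒜 = H ∧
      H = insert (∅ : Finset (Fin n))
        (Finset.univ.image (fun i : Fin n => ({i} : Finset (Fin n)))) := by
  classical
  set S := H.filter (fun A => x ∈ A) with hSdef
  set As := 𝒜.filter (fun A => ∀ B ∈ 𝒜, (A ∩ B).Nonempty) with hAsdef
  set A' := 𝒜 \ As with hA'def
  have hb : 0 < A'.card := Finset.card_pos.2 hne
  -- clear denominators
  have hnat : As.card * (n+1) + A'.card = S.card * (n+1) := by
    have hn : ((n:ℝ)+1) ≠ 0 := by positivity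
    have h1 : ((As.card : ℝ) + (A'.card : ℝ) / (n+1)) * ((n:ℝ)+1)
        = (S.card : ℝ) * ((n:ℝ)+1) := by rw [heq]
    have h2 : (As.card : ℝ) * ((n:ℝ)+1) + (A'.card : ℝ) = (S.card : ℝ) * ((n:ℝ)+1) := by
      field_simp at h1
      linarith
    exact_mod_cast h2
  -- Step 1: ∅ ∈ 𝒜
  have hempty : ∅ ∈ 𝒜 := by
    by_contra hempty
    obtain ⟨y₀, hdeg⟩ := degree_bound x A'
    have hA'e : A'.erase ∅ = A' :=
      Finset.erase_eq_of_notMem (fun h => hempty (Finset.mem_sdiff.1 h).1)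
    rw [hA'e] at hdeg
    set C := As ∪ A'.filter (fun A => y₀ ∈ A) with hCdef
    set d := (A'.filter (fun A => y₀ ∈ A)).card with hddef
    have hCH : C ⊆ H := by
      intro P hP
      rcases Finset.mem_union.1 hP with h | h
      · exact h𝒜 (Finset.filter_subset _ _ h)
      · exact h𝒜 (Finset.mem_sdiff.1 (Finset.filter_subset _ _ h)).1
    have hCint : ∀ P ∈ C, ∀ Q ∈ C, (P ∩ Q).Nonempty := by
      intro P hP Q hQ
      rcases Finset.mem_union.1 hP with hP1 | hP1 <;> rcases Finset.mem_union.1 hQ with hQ1 | hQ1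
      · exact (Finset.mem_filter.1 hP1).2 Q (Finset.filter_subset _ _ hQ1)
      · exact (Finset.mem_filter.1 hP1).2 Q
          (Finset.mem_sdiff.1 (Finset.filter_subset _ _ hQ1)).1
      · have := (Finset.mem_filter.1 hQ1).2 P
          (Finset.mem_sdiff.1 (Finset.filter_subset _ _ hP1)).1
        rwa [Finset.inter_comm] at this
      · exact ⟨y₀, Finset.mem_inter.2
          ⟨(Finset.mem_filter.1 hP1).2, (Finset.mem_filter.1 hQ1).2⟩⟩
    have hdisjC : Disjoint As (A'.filter (fun A => y₀ ∈ A)) := by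
      have : Disjoint As A' := Finset.disjoint_sdiff
      exact this.mono_right (Finset.filter_subset _ _)
    have hCcard : C.card = As.card + d := Finset.card_union_of_disjoint hdisjC
    have hchv : C.card ≤ S.card := chvatal H x hH hcomp C hCH hCint
    have h4 : (As.card + d) * (n+1) ≤ S.card * (n+1) :=
      Nat.mul_le_mul_right _ (hCcard ▸ hchv)
    rw [add_mul, ← hnat] at h4
    have h5 : d * (n+1) ≤ A'.card := Nat.le_of_add_le_add_left h4
    have h6 : d * (n+1) ≤ n * d := h5.trans hdeg
    have h7 : n * d + d ≤ n * d := by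
      calc n * d + d = d * (n+1) := by ring
      _ ≤ n * d := h6
    have hd0 : d = 0 := by omega
    rw [hd0, Nat.mul_zero] at hdeg
    omega
  -- hence As = ∅
  have hAs0 : As = ∅ := by
    rw [Finset.eq_empty_iff_forall_notMem]
    intro P hP
    have := (Finset.mem_filter.1 hP).2 ∅ hempty
    simp at this
  have hA'A : A' = 𝒜 := by rw [hA'def, hAs0, Finset.sdiff_empty]
  rw [hAs0, hA'A] at hnat
  simp only [Finset.card_empty, Nat.zero_mul, Nat.zero_add] at hnat
  rw [hA'A] at hb
  -- S.card = 1 and 𝒜.card = n + 1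
  have hs1 : 1 ≤ S.card := by
    rcases Nat.eq_zero_or_pos S.card with h | h
    · rw [h, Nat.zero_mul] at hnat; omega
    · exact h
  obtain ⟨y₀, hdeg⟩ := degree_bound x 𝒜
  have herase : (𝒜.erase ∅).card + 1 = 𝒜.card := Finset.card_erase_add_one hempty
  set C := 𝒜.filter (fun A => y₀ ∈ A) with hCdef
  have hchv : C.card ≤ S.card := by
    refine chvatal H x hH hcomp C (fun P hP => h𝒜 (Finset.filter_subset _ _ hP)) ?_
    intro P hP Q hQ
    exact ⟨y₀, Finset.mem_inter.2 ⟨(Finset.mem_filter.1 hP).2, (Finset.mem_filter.1 hQ).2⟩⟩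
  have e3 : 𝒜.card ≤ n * S.card + 1 := by
    have h6 : n * C.card ≤ n * S.card := Nat.mul_le_mul_left _ hchv
    omega
  have e4 : S.card * (n+1) ≤ n * S.card + 1 := hnat ▸ e3
  have e5 : n * S.card + S.card ≤ n * S.card + 1 := by
    calc n * S.card + S.card = S.card * (n+1) := by ring
    _ ≤ n * S.card + 1 := e4
  have hsc : S.card = 1 := le_antisymm (Nat.le_of_add_le_add_left e5) hs1
  have hac : 𝒜.card = n + 1 := by rw [hnat, hsc, Nat.one_mul]
  -- S = {{x}}
  obtain ⟨D, hDeq⟩ := Finset.card_eq_one.1 hsc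
  have hDS : D ∈ S := hDeq ▸ Finset.mem_singleton_self D
  have hDH : D ∈ H := (Finset.mem_filter.1 hDS).1
  have hxD : x ∈ D := (Finset.mem_filter.1 hDS).2
  have hxH : ({x} : Finset (Fin n)) ∈ H := hH D hDH {x} (Finset.singleton_subset_iff.2 hxD)
  have hxS : ({x} : Finset (Fin n)) ∈ S :=
    Finset.mem_filter.2 ⟨hxH, Finset.mem_singleton_self x⟩
  have hDx : D = {x} := by
    rw [hDeq, Finset.mem_singleton] at hxS; exact hxS.symm
  rw [hDx] at hDeq
  -- H ⊆ T
  set T := insert (∅ : Finset (Fin n))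
    (Finset.univ.image (fun i : Fin n => ({i} : Finset (Fin n)))) with hTdef
  have hHT : H ⊆ T := by
    intro F hF
    rcases eq_or_ne F ∅ with rfl | hFne
    · exact Finset.mem_insert_self _ _
    have hFpos : 0 < F.card := Finset.card_pos.2 (Finset.nonempty_iff_ne_empty.2 hFne)
    have hFcard : F.card = 1 := by
      by_contra hc
      have h2 : 2 ≤ F.card := by omega
      by_cases hxF : x ∈ F
      · have hFS : F ∈ S := Finset.mem_filter.2 ⟨hF, hxF⟩
        rw [hDeq, Finset.mem_singleton] at hFS
        rw [hFS] at h2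
        simp at h2
      · obtain ⟨y, hy⟩ := Finset.nonempty_iff_ne_empty.2 hFne
        have h1 : insert x (F.erase y) ∈ H := hcomp F hF y hy hxF
        have hS1 : insert x (F.erase y) ∈ S :=
          Finset.mem_filter.2 ⟨h1, Finset.mem_insert_self _ _⟩
        rw [hDeq, Finset.mem_singleton] at hS1
        have h3 : (insert x (F.erase y)).card = F.card := by
          rw [Finset.card_insert_of_notMem (fun hc2 => hxF (Finset.mem_of_mem_erase hc2)),
            Finset.card_erase_of_mem hy]
          omega
        rw [hS1] at h3
        simp at h3
        omega
    obtain ⟨i, hi⟩ := Finset.card_eq_one.1 hFcard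
    exact Finset.mem_insert_of_mem (Finset.mem_image.2 ⟨i, Finset.mem_univ i, hi.symm⟩)
  have hTcard : T.card = n + 1 := by
    rw [hTdef, Finset.card_insert_of_notMem (by
        intro hmem
        obtain ⟨i, -, h⟩ := Finset.mem_image.1 hmem
        exact Finset.singleton_ne_empty i h),
      Finset.card_image_of_injective _ Finset.singleton_injective, Finset.card_univ,
      Fintype.card_fin]
  have h𝒜T : 𝒜 ⊆ T := fun F hF => hHT (h𝒜 hF)
  have h𝒜eqT : 𝒜 = T := Finset.eq_of_subset_of_card_le h𝒜T (by rw [hTcard, hac])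
  have hHeqT : H = T := by
    refine Finset.Subset.antisymm hHT ?_
    rw [← h𝒜eqT]
    exact h𝒜
  exact ⟨h𝒜eqT.trans hHeqT.symm, hHeqT⟩
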